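/- Let m ≥ 1 and let F be a finite set of strings over the alphabet Fin m, each of length at least 2; for each j ≥ 2 let a_j be the number of elements of F of length j, and for each n let s_n be the number of strings of length n over Fin m that avoid F. Let A be the formal power series 1 − m·X + ∑_{j≥2} a_j·X^j over ℝ, and let g_n be the n-th coefficient of the inverse power series A⁻¹. If g_n > 0 for every n, then s_n ≥ g_n for every n. -/

import Mathlib

section AvoidAux

variable {m : ℕ}

/-- All words of length `n` over `Fin m`. -/
def WS (m n : ℕ) : Finset (List (Fin m)) :=
  (Finset.univ : Finset (List.Vector (Fin m) n)).map
    ⟨List.Vector.toList, List.Vector.toList_injective⟩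

lemma mem_WS {n : ℕ} {w : List (Fin m)} : w ∈ WS m n ↔ w.length = n := by
  constructor
  · intro h
    simp only [WS, Finset.mem_map, Finset.mem_univ, Function.Embedding.coeFn_mk, true_and] at h
    obtain ⟨v, rfl⟩ := h
    exact v.toList_length
  · intro h
    simp only [WS, Finset.mem_map, Finset.mem_univ, Function.Embedding.coeFn_mk, true_and]
    exact ⟨⟨w, h⟩, rfl⟩

/-- Words of length `n` avoiding `F`. -/
def Av (F : Finset (List (Fin m))) (n : ℕ) : Finset (List (Fin m)) :=
  (WS m n).filter (fun w => ∀ f ∈ F, ¬ f <:+: w)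

lemma mem_Av {F : Finset (List (Fin m))} {n : ℕ} {w : List (Fin m)} :
    w ∈ Av F n ↔ w.length = n ∧ ∀ f ∈ F, ¬ f <:+: w := by
  simp [Av, mem_WS]

lemma natCard_eq (F : Finset (List (Fin m))) (n : ℕ) :
    Nat.card {w : List (Fin m) // w.length = n ∧ ∀ f ∈ F, ¬ f <:+: w} = (Av F n).card := by
  rw [← Nat.card_eq_finsetCard]
  exact Nat.card_congr (Equiv.subtypeEquivRight (fun w => by rw [mem_Av])).symm

lemma Av_zero (F : Finset (List (Fin m))) (hF : ∀ w ∈ F, 2 ≤ w.length) :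
    Av F 0 = {[]} := by
  ext w
  simp only [mem_Av, List.length_eq_zero_iff, Finset.mem_singleton]
  constructor
  · rintro ⟨rfl, -⟩; rfl
  · rintro rfl
    refine ⟨rfl, fun f hf hinf => ?_⟩
    have := hF f hf
    rw [List.infix_nil] at hinf
    subst hinf
    simp at this

/-- Key combinatorial inequality. -/
lemma key (F : Finset (List (Fin m))) (hF : ∀ w ∈ F, 2 ≤ w.length) (n : ℕ) :
    m * (Av F n).card ≤ (Av F (n+1)).card
      + ∑ f ∈ F.filter (fun f => f.length ≤ n + 1), (Av F (n + 1 - f.length)).card := by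
  classical
  set B : Finset ((_ : List (Fin m)) × List (Fin m)) :=
    (F.filter (fun f => f.length ≤ n + 1)).sigma (fun f => Av F (n + 1 - f.length)) with hB
  set T : Finset (List (Fin m) ⊕ (_ : List (Fin m)) × List (Fin m)) :=
    (Av F (n+1)).map ⟨Sum.inl, Sum.inl_injective⟩ ∪ B.map ⟨Sum.inr, Sum.inr_injective⟩ with hT
  have hdisj : Disjoint ((Av F (n+1)).map ⟨Sum.inl, Sum.inl_injective⟩)
      (B.map ⟨Sum.inr, Sum.inr_injective⟩) := by
    simp only [Finset.disjoint_left, Finset.mem_map, Function.Embedding.coeFn_mk]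
    rintro a ⟨x, -, rfl⟩ ⟨y, -, h⟩
    exact Sum.inr_ne_inl h
  have hTcard : T.card = (Av F (n+1)).card
      + ∑ f ∈ F.filter (fun f => f.length ≤ n + 1), (Av F (n + 1 - f.length)).card := by
    rw [hT, Finset.card_union_of_disjoint hdisj, Finset.card_map, Finset.card_map, hB,
      Finset.card_sigma]
  have hcard : ((Finset.univ : Finset (Fin m)) ×ˢ Av F n).card = m * (Av F n).card := by
    simp [Finset.card_product]
  rw [← hcard, ← hTcard]
  set wd : Fin m × List (Fin m) → List (Fin m) := fun p => p.2 ++ [p.1] with hwd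
  -- main structural facts about a bad extension
  have main : ∀ p : Fin m × List (Fin m), p ∈ (Finset.univ : Finset (Fin m)) ×ˢ Av F n →
      ∀ h : ∃ f ∈ F, f <:+: wd p,
      h.choose ∈ F ∧ h.choose.length ≤ n + 1 ∧
      (wd p).take (n + 1 - h.choose.length) ∈ Av F (n + 1 - h.choose.length) ∧
      (wd p).take (n + 1 - h.choose.length) ++ h.choose = wd p := by
    intro p hp h
    obtain ⟨hx_len, hx_av⟩ := mem_Av.1 (Finset.mem_product.1 hp).2
    obtain ⟨hfF, hinf⟩ := h.choose_spec
    set f := h.choose with hf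
    have hflen : 2 ≤ f.length := hF f hfF
    have hwlen : (wd p).length = n + 1 := by simp [hwd, hx_len]
    have hfle : f.length ≤ n + 1 := hwlen ▸ hinf.length_le
    -- f is a suffix of wd p
    have hsuf : f <:+ wd p := by
      obtain ⟨u, t, hut⟩ := hinf
      rcases t.eq_nil_or_concat with rfl | ⟨t', d, rfl⟩
      · exact ⟨u, by simpa using hut⟩
      · exfalso
        apply hx_av f hfF
        rw [List.concat_eq_append, ← List.append_assoc] at hut
        obtain ⟨h3, -⟩ := List.append_inj' hut rfl
        exact ⟨u, t', by simpa [List.append_assoc] using h3⟩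
    obtain ⟨u, hu⟩ := hsuf
    have hulen : u.length = n + 1 - f.length := by
      have := congrArg List.length hu
      simp only [List.length_append] at this
      omega
    have htake : (wd p).take (n + 1 - f.length) = u := by
      rw [← hu, ← hulen, List.take_left]
    have hk : n + 1 - f.length ≤ p.2.length := by omega
    have hupre : u <+: p.2 := by
      rw [← htake, hwd]
      simp only []
      rw [List.take_append_of_le_length hk]
      exact List.take_prefix _ _
    have huav : ∀ g ∈ F, ¬ g <:+: u := fun g hg hgu => hx_av g hg (hgu.trans hupre.isInfix)
    refine ⟨hfF, hfle, ?_, by rw [htake]; exact hu⟩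
    rw [htake]
    exact mem_Av.2 ⟨hulen, huav⟩
  -- cancellation of the last letter
  have wd_inj : ∀ p q : Fin m × List (Fin m), wd p = wd q → p = q := by
    intro p q hpq
    obtain ⟨h1, h2⟩ := List.append_inj' hpq rfl
    have : p.1 = q.1 := by simpa using h2
    exact Prod.ext this h1
  apply Finset.card_le_card_of_injOn (fun p =>
    if h : ∃ f ∈ F, f <:+: wd p
    then Sum.inr (⟨h.choose, (wd p).take (n + 1 - h.choose.length)⟩ :
      (_ : List (Fin m)) × List (Fin m))
    else Sum.inl (wd p))
  · intro p hp
    by_cases h : ∃ f ∈ F, f <:+: wd p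
    · obtain ⟨h1, h2, h3, -⟩ := main p hp h
      simp only [dif_pos h]
      refine Finset.mem_union_right _ (Finset.mem_map.2 ⟨⟨h.choose, _⟩, ?_, rfl⟩)
      exact Finset.mem_sigma.2 ⟨Finset.mem_filter.2 ⟨h1, h2⟩, h3⟩
    · simp only [dif_neg h]
      refine Finset.mem_union_left _ (Finset.mem_map.2 ⟨wd p, ?_, rfl⟩)
      push_neg at h
      obtain ⟨hx_len, -⟩ := mem_Av.1 (Finset.mem_product.1 hp).2
      exact mem_Av.2 ⟨by simp [hwd, hx_len], h⟩
  · intro p hp q hq heq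
    simp only [Finset.coe_product, Set.mem_prod] at hp hq
    have hp' : p ∈ (Finset.univ : Finset (Fin m)) ×ˢ Av F n := by
      exact Finset.mem_product.2 ⟨Finset.mem_univ _, hp.2⟩
    have hq' : q ∈ (Finset.univ : Finset (Fin m)) ×ˢ Av F n := by
      exact Finset.mem_product.2 ⟨Finset.mem_univ _, hq.2⟩
    by_cases h1 : ∃ f ∈ F, f <:+: wd p <;> by_cases h2 : ∃ f ∈ F, f <:+: wd q
    · simp only [dif_pos h1, dif_pos h2, Sum.inr.injEq] at heq
      obtain ⟨-, -, -, hd1⟩ := main p hp' h1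
      obtain ⟨-, -, -, hd2⟩ := main q hq' h2
      have hfe : h1.choose = h2.choose := congrArg Sigma.fst heq
      have hte : (wd p).take (n + 1 - h1.choose.length)
          = (wd q).take (n + 1 - h2.choose.length) := by
        have := (Sigma.mk.inj_iff.1 heq).2
        exact eq_of_heq this
      apply wd_inj
      rw [← hd1, ← hd2, hte, hfe]
    · simp only [dif_pos h1, dif_neg h2] at heq
      exact (Sum.inr_ne_inl heq).elim
    · simp only [dif_neg h1, dif_pos h2] at heq
      exact (Sum.inl_ne_inr heq).elim
    · simp only [dif_neg h1, dif_neg h2, Sum.inl.injEq] at heq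
      exact wd_inj _ _ heq

end AvoidAux

/-- Let `F` be a finite set of forbidden strings over `Fin m` (each of length ≥ 2),
`a_j` the number of forbidden strings of length `j`, `s_n` the number of strings of
length `n` avoiding `F`, and `A = 1 − m·X + ∑_{j≥2} a_j·X^j ∈ ℝ⟦X⟧` with
`g_n = coeff n A⁻¹`.  If `g_n > 0` for all `n`, then `s_n ≥ g_n` for all `n`. -/
theorem avoiding_count_ge_inv_coeff (m : ℕ) (hm : 1 ≤ m)
    (F : Finset (List (Fin m))) (hF : ∀ w ∈ F, 2 ≤ w.length)
    (A : PowerSeries ℝ)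
    (hA : A = PowerSeries.mk (fun j => if j = 0 then 1 else if j = 1 then -(m : ℝ)
        else ((F.filter (fun w => w.length = j)).card : ℝ)))
    (hpos : ∀ n : ℕ, 0 < PowerSeries.coeff n A⁻¹) :
    ∀ n : ℕ, PowerSeries.coeff n A⁻¹
      ≤ (Nat.card {w : List (Fin m) // w.length = n ∧ ∀ f ∈ F, ¬ f <:+: w} : ℝ) := by
  classical
  set s : ℕ → ℕ := fun k => (Av F k).card with hs
  have hs0 : s 0 = 1 := by rw [hs]; simp [Av_zero F hF]
  set S : PowerSeries ℝ := PowerSeries.mk (fun k => (s k : ℝ)) with hS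
  have hcA : ∀ j, PowerSeries.coeff j A = if j = 0 then 1 else if j = 1 then -(m : ℝ)
      else ((F.filter (fun w => w.length = j)).card : ℝ) := by
    intro j; rw [hA, PowerSeries.coeff_mk]
  have hc0 : PowerSeries.constantCoeff A ≠ 0 := by
    rw [← PowerSeries.coeff_zero_eq_constantCoeff_apply, hcA 0]
    norm_num
  have hSid : A⁻¹ * (A * S) = S := by
    rw [← mul_assoc, PowerSeries.inv_mul_cancel _ hc0, one_mul]
  have hD0 : PowerSeries.coeff 0 (A * S) = 1 := by
    rw [PowerSeries.coeff_mul]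
    simp [hcA 0, hS, hs0]
  -- the key inequality, regrouped by length
  have key' : ∀ n : ℕ, (m : ℝ) * s n ≤ s (n+1)
      + ∑ i ∈ Finset.range n,
        ((F.filter (fun w => w.length = i + 2)).card : ℝ) * s (n + 1 - (i + 2)) := by
    intro n
    have hmaps : ∀ f ∈ F.filter (fun f => f.length ≤ n + 1),
        f.length - 2 ∈ Finset.range n := by
      intro f hf
      obtain ⟨hf1, hf2⟩ := Finset.mem_filter.1 hf
      have := hF f hf1
      exact Finset.mem_range.2 (by omega)
    have hgrp : ∑ f ∈ F.filter (fun f => f.length ≤ n + 1), s (n + 1 - f.length)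
        = ∑ i ∈ Finset.range n,
          (F.filter (fun w => w.length = i + 2)).card * s (n + 1 - (i + 2)) := by
      rw [← Finset.sum_fiberwise_of_maps_to hmaps (fun f => s (n + 1 - f.length))]
      refine Finset.sum_congr rfl (fun i hi => ?_)
      have hfiber : (F.filter (fun f => f.length ≤ n + 1)).filter
          (fun f => f.length - 2 = i) = F.filter (fun w => w.length = i + 2) := by
        ext f
        simp only [Finset.mem_filter]
        constructor
        · rintro ⟨⟨hf1, hf2⟩, hf3⟩
          have := hF f hf1
          exact ⟨hf1, by omega⟩
        · rintro ⟨hf1, hf2⟩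
          have hi' := Finset.mem_range.1 hi
          exact ⟨⟨hf1, by omega⟩, by omega⟩
      rw [hfiber]
      have hcst : ∀ f ∈ F.filter (fun w => w.length = i + 2),
          s (n + 1 - f.length) = s (n + 1 - (i + 2)) := by
        intro f hf
        rw [(Finset.mem_filter.1 hf).2]
      rw [Finset.sum_congr rfl hcst, Finset.sum_const, smul_eq_mul]
    have := key F hF n
    rw [hgrp] at this
    have := (Nat.cast_le (α := ℝ)).2 this
    push_cast at this ⊢
    linarith
  have hDpos : ∀ k, 0 ≤ PowerSeries.coeff k (A * S) := by
    intro k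
    rcases k with _ | n
    · rw [hD0]; norm_num
    · rw [PowerSeries.coeff_mul, Finset.Nat.sum_antidiagonal_eq_sum_range_succ_mk]
      rw [Finset.sum_range_succ', Finset.sum_range_succ']
      have e0 : PowerSeries.coeff 0 A * PowerSeries.coeff (n + 1 - 0) S = s (n+1) := by
        rw [hcA 0, hS]; simp
      have e1 : PowerSeries.coeff (0+1) A * PowerSeries.coeff (n + 1 - (0+1)) S
          = -(m : ℝ) * s n := by
        rw [hcA 1, hS]; simp
      have e2 : ∀ i ∈ Finset.range n,
          PowerSeries.coeff (i+1+1) A * PowerSeries.coeff (n + 1 - (i+1+1)) S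
          = ((F.filter (fun w => w.length = i + 2)).card : ℝ) * s (n + 1 - (i + 2)) := by
        intro i hi
        have h12 : i + 1 + 1 = i + 2 := by omega
        rw [hcA (i+1+1), if_neg (by omega), if_neg (by omega), hS, PowerSeries.coeff_mk, h12]
      rw [e0, e1, Finset.sum_congr rfl e2]
      have := key' n
      linarith
  intro n
  rw [natCard_eq F n]
  have hmem : ((n, 0) : ℕ × ℕ) ∈ Finset.HasAntidiagonal.antidiagonal n := by simp
  have h1 : PowerSeries.coeff n A⁻¹ ≤ PowerSeries.coeff n S := by
    rw [← hSid, PowerSeries.coeff_mul]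
    have hle := Finset.single_le_sum
      (f := fun p : ℕ × ℕ => PowerSeries.coeff p.1 A⁻¹ * PowerSeries.coeff p.2 (A * S))
      (fun p _ => mul_nonneg (hpos p.1).le (hDpos p.2)) hmem
    simpa [hD0] using hle
  have h2 : PowerSeries.coeff n S = ((Av F n).card : ℝ) := by
    rw [hS, PowerSeries.coeff_mk]
  linarith
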